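/- Let r_1, …, r_t ∈ ℝ^{1×n} be row vectors, let 1 ≤ W ≤ t, let 0 ≤ ε < 1, and let t_1, t_2 be indices with 1 ≤ t_1 ≤ t−W+1 < t_2 ≤ t. Define S_1 = Σ_{k=t_1}^{t} r_kᵀ r_k, S_2 = Σ_{k=t_2}^{t} r_kᵀ r_k, and A = Σ_{k=t−W+1}^{t} r_kᵀ r_k. If either t_2 = t_1 + 1 or (1−ε)·S_1 ⪯ S_2 in the Loewner order, then (1−ε)·S_1 ⪯ A ⪯ S_1; that is, S_1 is a (1+ε)-spectral approximation of the Gram matrix A of the sliding window of size W. -/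

import Mathlib

open Matrix

lemma psd_add {n : ℕ} {X Y : Matrix (Fin n) (Fin n) ℝ}
    (hX : X.PosSemidef) (hY : Y.PosSemidef) : (X + Y).PosSemidef := by
  refine PosSemidef.of_dotProduct_mulVec_nonneg (hX.1.add hY.1) (fun x => ?_)
  have := add_nonneg (hX.dotProduct_mulVec_nonneg x) (hY.dotProduct_mulVec_nonneg x)
  simpa [add_mulVec, dotProduct_add] using this

lemma psd_vecMulVec {n : ℕ} (v : Fin n → ℝ) : (vecMulVec v v).PosSemidef := by
  refine PosSemidef.of_dotProduct_mulVec_nonneg ?_ ?_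
  · ext i j
    simp [vecMulVec, Matrix.conjTranspose_apply, mul_comm]
  · intro x
    have : dotProduct (star x) (vecMulVec v v *ᵥ x) = (v ⬝ᵥ x) * (v ⬝ᵥ x) := by
      simp [vecMulVec, dotProduct, mulVec, Finset.sum_mul, Finset.mul_sum, mul_assoc,
        mul_comm, mul_left_comm]
    rw [this]
    exact mul_self_nonneg _

lemma psd_sum {n : ℕ} (s : Finset ℕ) (r : ℕ → (Fin n → ℝ)) :
    (∑ k ∈ s, vecMulVec (r k) (r k)).PosSemidef := by
  classical
  induction s using Finset.induction with
  | empty => simpa using (Matrix.PosSemidef.zero :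
      (0 : Matrix (Fin n) (Fin n) ℝ).PosSemidef)
  | insert _ _ h ih =>
    rw [Finset.sum_insert h]
    exact psd_add (psd_vecMulVec _) ih

lemma psd_smul {n : ℕ} {X : Matrix (Fin n) (Fin n) ℝ} (hX : X.PosSemidef)
    {c : ℝ} (hc : 0 ≤ c) : (c • X).PosSemidef := by
  refine PosSemidef.of_dotProduct_mulVec_nonneg ?_ (fun x => ?_)
  · unfold Matrix.IsHermitian
    rw [conjTranspose_smul, hX.1]
    simp
  have := mul_nonneg hc (hX.dotProduct_mulVec_nonneg x)
  simpa [smul_mulVec, dotProduct_smul, smul_eq_mul] using this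

lemma psd_sum_sdiff {n : ℕ} (r : ℕ → (Fin n → ℝ)) {s u : Finset ℕ} (h : u ⊆ s) :
    ((∑ k ∈ s, vecMulVec (r k) (r k)) - ∑ k ∈ u, vecMulVec (r k) (r k)).PosSemidef := by
  classical
  have : (∑ k ∈ s, vecMulVec (r k) (r k)) - (∑ k ∈ u, vecMulVec (r k) (r k))
      = ∑ k ∈ s \ u, vecMulVec (r k) (r k) := by
    rw [← Finset.sum_sdiff h]; abel
  rw [this]
  exact psd_sum _ _

/-- **Spectral histogram correctness invariant.**
With `S₁ = ∑_{k=t₁}^t rₖᵀrₖ`, `S₂ = ∑_{k=t₂}^t rₖᵀrₖ`, `A = ∑_{k=t-W+1}^t rₖᵀrₖ`,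
if `t₁ ≤ t-W+1 < t₂` and either `t₂ = t₁+1` or `(1-ε) • S₁ ⪯ S₂`, then
`(1-ε) • S₁ ⪯ A ⪯ S₁`. -/
theorem spectral_histogram_invariant (n t W : ℕ) (r : ℕ → (Fin n → ℝ))
    (hW1 : 1 ≤ W) (hWt : W ≤ t)
    (ε : ℝ) (hε0 : 0 ≤ ε) (hε1 : ε < 1)
    (t1 t2 : ℕ) (ht1 : 1 ≤ t1) (ht1W : t1 ≤ t - W + 1) (ht2W : t - W + 1 < t2)
    (ht2t : t2 ≤ t)
    (S1 S2 A : Matrix (Fin n) (Fin n) ℝ)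
    (hS1 : S1 = ∑ k ∈ Finset.Icc t1 t, vecMulVec (r k) (r k))
    (hS2 : S2 = ∑ k ∈ Finset.Icc t2 t, vecMulVec (r k) (r k))
    (hA : A = ∑ k ∈ Finset.Icc (t - W + 1) t, vecMulVec (r k) (r k))
    (hcond : t2 = t1 + 1 ∨ (S2 - (1 - ε) • S1).PosSemidef) :
    (A - (1 - ε) • S1).PosSemidef ∧ (S1 - A).PosSemidef := by
  have hsub1 : Finset.Icc (t - W + 1) t ⊆ Finset.Icc t1 t :=
    Finset.Icc_subset_Icc ht1W le_rfl
  have hS1A : (S1 - A).PosSemidef := by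
    rw [hS1, hA]; exact psd_sum_sdiff r hsub1
  refine ⟨?_, hS1A⟩
  rcases hcond with heq | hpsd
  · -- t2 = t1 + 1, so t1 = t - W + 1 and A = S1
    have ht1eq : t1 = t - W + 1 := le_antisymm ht1W (by omega)
    have hAS1 : A = S1 := by rw [hA, hS1, ht1eq]
    rw [hAS1]
    have : S1 - (1 - ε) • S1 = ε • S1 := by
      rw [sub_smul, one_smul]; module
    rw [this, hS1]
    exact psd_smul (psd_sum _ _) hε0
  · have hsub2 : Finset.Icc t2 t ⊆ Finset.Icc (t - W + 1) t :=
      Finset.Icc_subset_Icc (by omega) le_rfl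
    have hAS2 : (A - S2).PosSemidef := by
      rw [hA, hS2]; exact psd_sum_sdiff r hsub2
    have : A - (1 - ε) • S1 = (A - S2) + (S2 - (1 - ε) • S1) := by abel
    rw [this]
    exact psd_add hAS2 hpsd
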